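/- Let K ⊆ ℝ² be a compact set and L > 0 such that K is the image of a rectifiable curve of length L. Then for every ε > 0, the area (2-dimensional Lebesgue measure) of the ε-neighborhood of K is at most 2Lε + πε². -/

import Mathlib

open Set MeasureTheory Metric

lemma volume_vline (c : ℝ) : volume {z : ℂ | z.re = c} = 0 := by
  have h : {z : ℂ | z.re = c} = Complex.measurableEquivRealProd ⁻¹' ({c} ×ˢ (univ : Set ℝ)) := by
    ext z
    simp [Complex.measurableEquivRealProd_apply, eq_comm]
  rw [h, Complex.volume_preserving_equiv_real_prod.measure_preimage
    (((measurableSet_singleton c).prod MeasurableSet.univ).nullMeasurableSet)]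
  rw [Measure.volume_eq_prod, Measure.prod_prod]
  simp


lemma volume_halfball_pos (c : ℂ) (ε : ℝ) (hε : 0 < ε) :
    volume {z : ℂ | z ∈ ball c ε ∧ z.re < c.re} ≤ ENNReal.ofReal (Real.pi * ε ^ 2 / 2) ∧
    volume {z : ℂ | z ∈ ball c ε ∧ c.re < z.re} ≤ ENNReal.ofReal (Real.pi * ε ^ 2 / 2) := by
  set σ : ℂ ≃ₗᵢ[ℝ] ℂ := Complex.conjLIE.trans (LinearIsometryEquiv.neg ℝ) with hσ
  set f : ℂ → ℂ := fun z => c + σ (z + -c) with hf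
  have hmp : MeasurePreserving f volume volume :=
    (measurePreserving_add_left volume c).comp
      (σ.measurePreserving.comp (measurePreserving_add_right volume (-c)))
  set A := {z : ℂ | z ∈ ball c ε ∧ z.re < c.re} with hA
  set B := {z : ℂ | z ∈ ball c ε ∧ c.re < z.re} with hB
  have hσ_apply : ∀ z : ℂ, σ z = -(starRingEnd ℂ z) := fun z => by simp [hσ]
  have hfre : ∀ z : ℂ, (f z).re = 2 * c.re - z.re := by
    intro z; simp [hf, hσ_apply, Complex.sub_re, Complex.add_re]; ring
  have hfd : ∀ z : ℂ, dist (f z) c = dist z c := by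
    intro z
    have : f z - c = σ (z - c) := by simp [hf, hσ_apply, sub_eq_add_neg]
    rw [dist_eq_norm, dist_eq_norm, this, σ.norm_map]
  have hBmeas : MeasurableSet B :=
    (measurableSet_ball.inter ((isOpen_lt continuous_const Complex.continuous_re).measurableSet))
  have hAmeas : MeasurableSet A :=
    (measurableSet_ball.inter ((isOpen_lt Complex.continuous_re continuous_const).measurableSet))
  have hpre : f ⁻¹' B = A := by
    ext z
    simp only [hA, hB, mem_preimage, mem_setOf_eq, mem_ball, hfd z, hfre z]
    constructor
    · rintro ⟨h1, h2⟩; exact ⟨h1, by linarith⟩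
    · rintro ⟨h1, h2⟩; exact ⟨h1, by linarith⟩
  have hAB : volume A = volume B := by
    rw [← hpre, hmp.measure_preimage hBmeas.nullMeasurableSet]
  have hdisj : Disjoint A B := by
    rw [Set.disjoint_left]
    rintro z ⟨_, h1⟩ ⟨_, h2⟩; exact absurd h2 (not_lt.2 h1.le)
  have hsub : A ∪ B ⊆ ball c ε := by
    rintro z (⟨h, _⟩ | ⟨h, _⟩) <;> exact h
  have hu : volume A + volume B ≤ volume (ball c ε) := by
    rw [← measure_union hdisj hBmeas]
    exact measure_mono hsub
  rw [← hAB, Complex.volume_ball] at hu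
  have hkey : volume A ≤ ENNReal.ofReal (Real.pi * ε ^ 2 / 2) := by
    have h2 : ENNReal.ofReal ε ^ 2 * NNReal.pi = ENNReal.ofReal (Real.pi * ε ^ 2) := by
      rw [← ENNReal.ofReal_pow hε.le, ← ENNReal.ofReal_coe_nnreal, ← ENNReal.ofReal_mul (by positivity)]
      norm_num [mul_comm]
    rw [h2] at hu
    have : volume A * 2 ≤ ENNReal.ofReal (Real.pi * ε ^ 2) := by
      rw [mul_two]; exact hu
    rw [ENNReal.ofReal_div_of_pos (by norm_num)]
    rw [ENNReal.le_div_iff_mul_le (Or.inl (by norm_num)) (Or.inl (by norm_num))]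
    simpa using this
  exact ⟨hkey, hAB ▸ hkey⟩


lemma volume_halfball (c : ℂ) (ε : ℝ) :
    volume {z : ℂ | z ∈ ball c ε ∧ z.re < c.re} ≤ ENNReal.ofReal (Real.pi * ε ^ 2 / 2) ∧
    volume {z : ℂ | z ∈ ball c ε ∧ c.re < z.re} ≤ ENNReal.ofReal (Real.pi * ε ^ 2 / 2) := by
  rcases le_or_gt ε 0 with hε | hε
  · have hb : ball c ε = ∅ := ball_eq_empty.2 hε
    constructor <;> · rw [show {z : ℂ | z ∈ ball c ε ∧ _ } = ∅ by rw [hb]; ext z; simp]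
                      simp
  · exact volume_halfball_pos c ε hε

lemma volume_rect (l ε : ℝ) (hl : 0 ≤ l) (hε : 0 < ε) :
    volume {z : ℂ | z.re ∈ Icc 0 l ∧ z.im ∈ Ioo (-ε) ε} = ENNReal.ofReal (2 * l * ε) := by
  have h : {z : ℂ | z.re ∈ Icc 0 l ∧ z.im ∈ Ioo (-ε) ε}
      = Complex.measurableEquivRealProd ⁻¹' ((Icc 0 l) ×ˢ (Ioo (-ε) ε)) := by
    ext z; simp [Complex.measurableEquivRealProd_apply]
  rw [h, Complex.volume_preserving_equiv_real_prod.measure_preimage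
    ((measurableSet_Icc.prod measurableSet_Ioo).nullMeasurableSet)]
  rw [Measure.volume_eq_prod, Measure.prod_prod, Real.volume_Icc, Real.volume_Ioo,
    ← ENNReal.ofReal_mul (by linarith)]
  congr 1; ring


lemma tube_std (l ε : ℝ) (hl : 0 ≤ l) (hε : 0 < ε) :
    volume (thickening ε (segment ℝ (0:ℂ) (l:ℂ)))
      ≤ ENNReal.ofReal (2 * l * ε + Real.pi * ε ^ 2) := by
  set R := {z : ℂ | z.re ∈ Icc 0 l ∧ z.im ∈ Ioo (-ε) ε}
  set HL := {z : ℂ | z ∈ ball (0:ℂ) ε ∧ z.re < (0:ℂ).re}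
  set HR := {z : ℂ | z ∈ ball (l:ℂ) ε ∧ (l:ℂ).re < z.re}
  have hsub : thickening ε (segment ℝ (0:ℂ) (l:ℂ)) ⊆ R ∪ HL ∪ HR := by
    intro z hz
    rw [mem_thickening_iff] at hz
    obtain ⟨p, hp, hd⟩ := hz
    have hps : p.im = 0 ∧ p.re ∈ Icc 0 l := by
      rw [segment_eq_image] at hp
      obtain ⟨t, ht, rfl⟩ := hp
      simp only [smul_zero, zero_add, Complex.real_smul, Complex.mul_im, Complex.mul_re,
        Complex.ofReal_re, Complex.ofReal_im]
      refine ⟨by simp, by simp; nlinarith [ht.1, ht.2], by simp; nlinarith [ht.1, ht.2]⟩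
    obtain ⟨hpim, hpre0, hprel⟩ : p.im = 0 ∧ 0 ≤ p.re ∧ p.re ≤ l := ⟨hps.1, hps.2.1, hps.2.2⟩
    rw [Complex.dist_eq_re_im, hpim] at hd
    rcases lt_or_ge z.re 0 with h0 | h0
    · left; right
      refine ⟨?_, by simpa using h0⟩
      rw [mem_ball, Complex.dist_eq_re_im]
      refine lt_of_le_of_lt ?_ hd
      apply Real.sqrt_le_sqrt
      simp only [Complex.zero_re, Complex.zero_im, sub_zero]
      nlinarith
    rcases lt_or_ge l z.re with h1 | h1
    · right
      refine ⟨?_, by simpa using h1⟩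
      rw [mem_ball, Complex.dist_eq_re_im]
      refine lt_of_le_of_lt ?_ hd
      apply Real.sqrt_le_sqrt
      simp only [Complex.ofReal_re, Complex.ofReal_im, sub_zero]
      nlinarith
    · left; left
      refine ⟨⟨h0, h1⟩, ?_⟩
      have him : |z.im| < ε := by
        have h2 : |z.im| = Real.sqrt ((z.im - 0) ^ 2) := by
          rw [sub_zero, Real.sqrt_sq_eq_abs]
        rw [h2]
        refine lt_of_le_of_lt ?_ hd
        apply Real.sqrt_le_sqrt
        nlinarith
      exact abs_lt.1 him
  calc volume (thickening ε (segment ℝ (0:ℂ) (l:ℂ))) ≤ volume (R ∪ HL ∪ HR) :=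
        measure_mono hsub
    _ ≤ volume R + volume HL + volume HR :=
        le_trans (measure_union_le _ _) (by gcongr; exact measure_union_le _ _)
    _ ≤ ENNReal.ofReal (2 * l * ε) + ENNReal.ofReal (Real.pi * ε ^ 2 / 2)
          + ENNReal.ofReal (Real.pi * ε ^ 2 / 2) := by
        gcongr
        · exact (volume_rect l ε hl hε).le
        · exact (volume_halfball 0 ε).1
        · exact (volume_halfball l ε).2
    _ = ENNReal.ofReal (2 * l * ε + Real.pi * ε ^ 2) := by
        rw [← ENNReal.ofReal_add (by positivity) (by positivity),
          ← ENNReal.ofReal_add (by positivity) (by positivity)]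
        ring_nf

lemma tube_seg (a b : ℂ) {ε : ℝ} (hε : 0 < ε) :
    volume (thickening ε (segment ℝ a b))
      ≤ ENNReal.ofReal (2 * dist a b * ε + Real.pi * ε ^ 2) := by
  rcases eq_or_ne a b with rfl | hab
  · rw [segment_same, thickening_singleton, Complex.volume_ball]
    rw [← ENNReal.ofReal_pow hε.le, ← ENNReal.ofReal_coe_nnreal,
      ← ENNReal.ofReal_mul (by positivity)]
    apply ENNReal.ofReal_le_ofReal
    simp only [dist_self]
    rw [NNReal.coe_real_pi]
    nlinarith [Real.pi_pos]
  · set l := dist a b with hldef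
    have hl : 0 < l := dist_pos.2 hab
    set u : ℂ := (b - a) / (l : ℂ) with hu
    have hba : ‖b - a‖ ≠ 0 := by
      rw [norm_ne_zero_iff, sub_ne_zero]
      exact fun h => hab h.symm
    have hul : ‖u‖ = 1 := by
      rw [hu, norm_div, Complex.norm_real, Real.norm_eq_abs, abs_of_pos hl, hldef, Complex.dist_eq,
        show a - b = -(b - a) by ring, norm_neg]
      exact div_self hba
    set e : Circle := ⟨u, show u ∈ Metric.sphere (0:ℂ) 1 from
      mem_sphere_zero_iff_norm.2 (by rw [hul])⟩ with he
    set g : ℂ → ℂ := fun z => a + rotation e z with hg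
    have hge : ∀ z, g z = a + u * z := fun z => by rw [hg]; exact congrArg (a + ·) (rotation_apply e z)
    have hiso : Isometry g := by
      intro z w
      simp only [hg]
      rw [edist_add_left]
      exact (rotation e).isometry z w
    have hginj : Function.Injective g := hiso.injective
    -- image of standard segment
    have hseg : g '' segment ℝ (0:ℂ) (l:ℂ) = segment ℝ a b := by
      have h1 : segment ℝ (0:ℂ) (l:ℂ) = (fun t : ℝ => t • (l:ℂ)) '' Icc 0 1 := by
        rw [segment_eq_image]; simp
      have h2 : segment ℝ a b = (fun t : ℝ => a + t • (b - a)) '' Icc 0 1 := by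
        rw [segment_eq_image']
      rw [h1, h2, image_image]
      apply image_congr
      intro t _
      rw [hge]
      congr 1
      have hlc : (l:ℂ) ≠ 0 := by exact_mod_cast hl.ne'
      rw [Complex.real_smul, Complex.real_smul, hu]
      field_simp
    -- thickening commutes with g
    have hthick : thickening ε (segment ℝ a b) = g '' thickening ε (segment ℝ (0:ℂ) (l:ℂ)) := by
      rw [← hseg]
      ext x
      obtain ⟨y, rfl⟩ : ∃ y, g y = x := by
        refine ⟨(rotation e).symm (x - a), ?_⟩
        rw [hg]; simp
      rw [hginj.mem_set_image]
      simp only [mem_thickening_iff]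
      constructor
      · rintro ⟨z, ⟨w, hw, rfl⟩, hd⟩
        exact ⟨w, hw, by rwa [hiso.dist_eq] at hd⟩
      · rintro ⟨w, hw, hd⟩
        exact ⟨g w, mem_image_of_mem g hw, by rwa [hiso.dist_eq]⟩
    -- measure preservation
    have hmp : MeasurePreserving g volume volume :=
      (measurePreserving_add_left volume a).comp (rotation e).measurePreserving
    have hvol : volume (g '' thickening ε (segment ℝ (0:ℂ) (l:ℂ)))
        = volume (thickening ε (segment ℝ (0:ℂ) (l:ℂ))) := by
      have hginv : g '' thickening ε (segment ℝ (0:ℂ) (l:ℂ))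
          = (fun x => (rotation e).symm (x - a)) ⁻¹' thickening ε (segment ℝ (0:ℂ) (l:ℂ)) := by
        ext x
        simp only [mem_preimage]
        constructor
        · rintro ⟨y, hy, rfl⟩
          simp only [hg, add_sub_cancel_left, LinearIsometryEquiv.symm_apply_apply]
          exact hy
        · intro hx
          refine ⟨(rotation e).symm (x - a), hx, ?_⟩
          simp only [hg]
          rw [LinearIsometryEquiv.apply_symm_apply]
          ring
      rw [hginv]
      have hmp2 : MeasurePreserving (fun x : ℂ => (rotation e).symm (x - a)) volume volume := by
        have := ((rotation e).symm.measurePreserving).comp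
          (measurePreserving_add_right volume (-a))
        simp only [sub_eq_add_neg]; exact this
      exact hmp2.measure_preimage (isOpen_thickening.measurableSet.nullMeasurableSet)
    rw [hthick, hvol]
    exact tube_std l ε hl.le hε

noncomputable def polyLen (p : ℕ → ℂ) (n : ℕ) : ℝ :=
  ∑ i ∈ Finset.range n, dist (p i) (p (i+1))

def polySet (p : ℕ → ℂ) (n : ℕ) : Set ℂ :=
  ⋃ i ∈ Finset.range n, segment ℝ (p i) (p (i+1))

lemma polyLen_nonneg (p : ℕ → ℂ) (n : ℕ) : 0 ≤ polyLen p n :=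
  Finset.sum_nonneg fun _ _ => dist_nonneg

lemma mem_polySet_right (p : ℕ → ℂ) {n : ℕ} (hn : 1 ≤ n) : p n ∈ polySet p n := by
  apply mem_biUnion (Finset.mem_range.2 (Nat.sub_lt hn one_pos))
  have : n - 1 + 1 = n := Nat.succ_pred_eq_of_pos hn
  rw [this]
  exact right_mem_segment ℝ _ _

lemma tube_poly (p : ℕ → ℂ) {ε : ℝ} (hε : 0 < ε) :
    ∀ n, 1 ≤ n → volume (thickening ε (polySet p n))
      ≤ ENNReal.ofReal (2 * polyLen p n * ε + Real.pi * ε ^ 2) := by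
  intro n
  induction n with
  | zero => intro h; exact absurd h (by norm_num)
  | succ n ih =>
    intro _
    rcases Nat.eq_zero_or_pos n with rfl | hn
    · have h1 : polySet p 1 = segment ℝ (p 0) (p 1) := by
        simp [polySet]
      have h2 : polyLen p 1 = dist (p 0) (p 1) := by
        simp [polyLen]
      rw [h1, h2]
      exact tube_seg _ _ hε
    · have hsplit : polySet p (n+1) = polySet p n ∪ segment ℝ (p n) (p (n+1)) := by
        simp [polySet, Finset.range_add_one, Set.biUnion_insert, union_comm]
      set A := thickening ε (polySet p n)
      set B := thickening ε (segment ℝ (p n) (p (n+1)))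
      have hAB : thickening ε (polySet p (n+1)) = A ∪ B := by
        rw [hsplit, thickening_union]
      have hball : ball (p n) ε ⊆ A ∩ B :=
        subset_inter (ball_subset_thickening (mem_polySet_right p hn) ε)
          (ball_subset_thickening (left_mem_segment ℝ _ _) ε)
      have hBmeas : MeasurableSet B := isOpen_thickening.measurableSet
      have hkey : volume (A ∪ B) + volume (A ∩ B) = volume A + volume B :=
        measure_union_add_inter A hBmeas
      have hπ : ENNReal.ofReal (Real.pi * ε ^ 2) ≤ volume (A ∩ B) := by
        refine le_trans ?_ (measure_mono hball)
        rw [Complex.volume_ball, ← ENNReal.ofReal_pow hε.le, ← ENNReal.ofReal_coe_nnreal,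
          ← ENNReal.ofReal_mul (by positivity), NNReal.coe_real_pi, mul_comm]
      have hstep : volume (A ∪ B) + ENNReal.ofReal (Real.pi * ε ^ 2)
          ≤ ENNReal.ofReal (2 * polyLen p (n+1) * ε + Real.pi * ε ^ 2)
            + ENNReal.ofReal (Real.pi * ε ^ 2) := by
        calc volume (A ∪ B) + ENNReal.ofReal (Real.pi * ε ^ 2)
            ≤ volume (A ∪ B) + volume (A ∩ B) := by gcongr
          _ = volume A + volume B := hkey
          _ ≤ ENNReal.ofReal (2 * polyLen p n * ε + Real.pi * ε ^ 2)
              + ENNReal.ofReal (2 * dist (p n) (p (n+1)) * ε + Real.pi * ε ^ 2) := by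
              gcongr
              · exact ih hn
              · exact tube_seg _ _ hε
          _ = ENNReal.ofReal (2 * polyLen p (n+1) * ε + Real.pi * ε ^ 2)
              + ENNReal.ofReal (Real.pi * ε ^ 2) := by
              have hnn1 : (0:ℝ) ≤ 2 * polyLen p n * ε :=
                mul_nonneg (mul_nonneg (by norm_num) (polyLen_nonneg p n)) hε.le
              have hnn2 : (0:ℝ) ≤ 2 * polyLen p (n+1) * ε :=
                mul_nonneg (mul_nonneg (by norm_num) (polyLen_nonneg p (n+1))) hε.le
              rw [← ENNReal.ofReal_add (add_nonneg hnn1 (by positivity)) (by positivity),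
                ← ENNReal.ofReal_add (add_nonneg hnn2 (by positivity)) (by positivity)]
              congr 1
              have hL : polyLen p (n+1) = polyLen p n + dist (p n) (p (n+1)) := by
                simp [polyLen, Finset.sum_range_succ]
              rw [hL]
              have hd : (0:ℝ) ≤ dist (p n) (p (n+1)) := dist_nonneg
              ring
      rw [hAB]
      exact (ENNReal.add_le_add_iff_right (by simp)).1 hstep

lemma televar (γ : ℝ → ℂ) (n : ℕ) (hn : 1 ≤ n) :
    ∑ i ∈ Finset.range n, eVariationOn γ (Icc 0 1 ∩ Icc ((i:ℝ)/n) (((i:ℝ)+1)/n))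
      = eVariationOn γ (Icc 0 1) := by
  have hn0 : (0:ℝ) < n := by exact_mod_cast hn
  have key : ∀ k, k ≤ n → ∑ i ∈ Finset.range k,
      eVariationOn γ (Icc 0 1 ∩ Icc ((i:ℝ)/n) (((i:ℝ)+1)/n))
      = eVariationOn γ (Icc 0 1 ∩ Icc 0 ((k:ℝ)/n)) := by
    intro k
    induction k with
    | zero =>
      intro _
      simp only [Finset.range_zero, Finset.sum_empty, Nat.cast_zero, zero_div]
      symm
      apply eVariationOn.subsingleton
      rintro x ⟨_, hx⟩ y ⟨_, hy⟩
      rw [mem_Icc] at hx hy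
      have e1 : x = 0 := le_antisymm hx.2 hx.1
      have e2 : y = 0 := le_antisymm hy.2 hy.1
      rw [e1, e2]
    | succ k ih =>
      intro hk
      have hk' : k ≤ n := Nat.le_of_succ_le hk
      have h1 : (0:ℝ) ≤ (k:ℝ)/n := by positivity
      have h2 : (k:ℝ)/n ≤ ((k:ℝ)+1)/n := by
        gcongr
        linarith
      have hmem : (k:ℝ)/n ∈ Icc (0:ℝ) 1 := by
        refine ⟨h1, ?_⟩
        rw [div_le_one hn0]
        exact_mod_cast hk'
      rw [Finset.sum_range_succ, ih hk',
        eVariationOn.Icc_add_Icc γ h1 h2 hmem]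
      push_cast
      ring_nf
  have h := key n le_rfl
  rw [div_self hn0.ne'] at h
  rw [h, inter_self]
/-- Hotelling's inequality: if `K ⊆ ℝ²` is the image of a rectifiable curve of
length `L > 0`, then the ε-neighborhood of `K` has area at most `2Lε + πε²`. -/
theorem stmt5 (K : Set ℂ) (hK : IsCompact K) (L : ℝ) (hL : 0 < L)
    (γ : ℝ → ℂ) (hγ : ContinuousOn γ (Icc 0 1)) (him : γ '' Icc 0 1 = K)
    (hlen : eVariationOn γ (Icc 0 1) = ENNReal.ofReal L)
    (ε : ℝ) (hε : 0 < ε) :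
    volume (Metric.thickening ε K) ≤ ENNReal.ofReal (2 * L * ε + Real.pi * ε ^ 2) := by
  have main : ∀ δ : ℝ, 0 < δ →
      volume (Metric.thickening ε K)
        ≤ ENNReal.ofReal (2 * L * (ε + δ) + Real.pi * (ε + δ) ^ 2) := by
    intro δ hδ
    have huc : UniformContinuousOn γ (Icc 0 1) :=
      isCompact_Icc.uniformContinuousOn_of_continuous hγ
    rw [Metric.uniformContinuousOn_iff] at huc
    obtain ⟨η, hη, hucd⟩ := huc δ hδ
    obtain ⟨m, hm⟩ := exists_nat_one_div_lt hη
    set n : ℕ := m + 1 with hn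
    have hn1 : 1 ≤ n := Nat.le_add_left 1 m
    have hn0 : (0:ℝ) < n := by exact_mod_cast hn1
    have hinv : 1 / (n:ℝ) < η := by exact_mod_cast hm
    set p : ℕ → ℂ := fun i => γ (min ((i:ℝ)/n) 1) with hp
    have hpval : ∀ i : ℕ, i ≤ n → p i = γ ((i:ℝ)/n) := by
      intro i hi
      have hmin : min ((i:ℝ)/n) 1 = (i:ℝ)/n :=
        min_eq_left (by rw [div_le_one hn0]; exact_mod_cast hi)
      simp only [hp]
      rw [hmin]
    have hKsub : K ⊆ Metric.thickening δ (polySet p n) := by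
      rintro x hx
      rw [← him] at hx
      obtain ⟨t, ht, rfl⟩ := hx
      set i : ℕ := min ⌊t * n⌋₊ (n - 1) with hi
      have hin : i < n := lt_of_le_of_lt (min_le_right _ _) (Nat.sub_lt hn1 one_pos)
      have hile : (i:ℝ) ≤ t * n := by
        refine le_trans ?_ (Nat.floor_le (mul_nonneg ht.1 hn0.le))
        exact_mod_cast min_le_left _ _
      have htle : t * n ≤ (i:ℝ) + 1 := by
        rcases le_or_gt ⌊t * n⌋₊ (n - 1) with hc | hc
        · have he : i = ⌊t * n⌋₊ := min_eq_left hc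
          rw [he]
          exact (Nat.lt_floor_add_one (t * n)).le
        · have hieq : i = n - 1 := min_eq_right hc.le
          have he2 : (i:ℝ) + 1 = n := by
            rw [hieq]
            have h3 : n - 1 + 1 = n := Nat.succ_pred_eq_of_pos hn1
            exact_mod_cast congrArg (Nat.cast (R := ℝ)) h3
          rw [he2]
          nlinarith [ht.2]
      have hiIcc : (i:ℝ)/n ∈ Icc (0:ℝ) 1 := by
        constructor
        · positivity
        · rw [div_le_one hn0]; exact_mod_cast hin.le
      have hdist : dist t ((i:ℝ)/n) < η := by
        have h1 : (i:ℝ)/n ≤ t := by rw [div_le_iff₀ hn0]; linarith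
        have h3 : t ≤ ((i:ℝ)+1)/n := by rw [le_div_iff₀ hn0]; linarith
        have h4 : ((i:ℝ)+1)/n = (i:ℝ)/n + 1/n := by ring
        rw [h4] at h3
        rw [Real.dist_eq, abs_of_nonneg (by linarith)]
        linarith
      have hγd : dist (γ t) (p i) < δ := by
        rw [hpval i hin.le]
        exact hucd t ht ((i:ℝ)/n) hiIcc hdist
      rw [Metric.mem_thickening_iff]
      exact ⟨p i, mem_biUnion (Finset.mem_range.2 hin) (left_mem_segment ℝ _ _), hγd⟩
    have hlenle : polyLen p n ≤ L := by
      rw [← ENNReal.ofReal_le_ofReal_iff hL.le]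
      calc ENNReal.ofReal (polyLen p n)
          = ∑ i ∈ Finset.range n, edist (γ ((i:ℝ)/n)) (γ (((i:ℝ)+1)/n)) := by
            rw [polyLen, ENNReal.ofReal_sum_of_nonneg (fun _ _ => dist_nonneg)]
            refine Finset.sum_congr rfl fun i hi => ?_
            rw [Finset.mem_range] at hi
            rw [hpval i hi.le, hpval (i+1) hi, edist_dist]
            norm_num
        _ ≤ ∑ i ∈ Finset.range n, eVariationOn γ (Icc 0 1 ∩ Icc ((i:ℝ)/n) (((i:ℝ)+1)/n)) := by
            refine Finset.sum_le_sum fun i hi => ?_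
            rw [Finset.mem_range] at hi
            have hle1 : ((i:ℝ)+1)/n ≤ 1 := by
              rw [div_le_one hn0]; exact_mod_cast hi
            have hmono : (i:ℝ)/n ≤ ((i:ℝ)+1)/n := by gcongr; linarith
            exact eVariationOn.edist_le γ
              ⟨⟨by positivity, le_trans hmono hle1⟩, ⟨le_rfl, hmono⟩⟩
              ⟨⟨by positivity, hle1⟩, ⟨hmono, le_rfl⟩⟩
        _ = ENNReal.ofReal L := by rw [televar γ n hn1, hlen]
    have hsub2 : Metric.thickening ε K ⊆ Metric.thickening (ε + δ) (polySet p n) :=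
      subset_trans (Metric.thickening_subset_of_subset ε hKsub)
        (Metric.thickening_thickening_subset ε δ _)
    calc volume (Metric.thickening ε K)
        ≤ volume (Metric.thickening (ε + δ) (polySet p n)) := measure_mono hsub2
      _ ≤ ENNReal.ofReal (2 * polyLen p n * (ε + δ) + Real.pi * (ε + δ) ^ 2) :=
          tube_poly p (by linarith) n hn1
      _ ≤ ENNReal.ofReal (2 * L * (ε + δ) + Real.pi * (ε + δ) ^ 2) := by
          apply ENNReal.ofReal_le_ofReal
          nlinarith [polyLen_nonneg p n]
  apply ENNReal.le_of_forall_pos_le_add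
  intro η hη _
  set c : ℝ := 2 * L + 2 * Real.pi * ε + Real.pi with hc
  have hcpos : 0 < c := by nlinarith [Real.pi_pos]
  have hη' : (0:ℝ) < (η:ℝ) := hη
  set δ : ℝ := min 1 ((η:ℝ) / c) with hδdef
  have hδpos : 0 < δ := lt_min one_pos (div_pos hη' hcpos)
  have hδ1 : δ ≤ 1 := min_le_left _ _
  have hδc : c * δ ≤ (η:ℝ) := by
    have h1 : δ ≤ (η:ℝ) / c := min_le_right _ _
    calc c * δ ≤ c * ((η:ℝ)/c) := by gcongr
      _ = (η:ℝ) := mul_div_cancel₀ _ hcpos.ne'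
  refine le_trans (main δ hδpos) ?_
  have hexp : 2*L*(ε+δ) + Real.pi*(ε+δ)^2 ≤ (2*L*ε + Real.pi*ε^2) + c*δ := by
    rw [hc]
    nlinarith [mul_nonneg (mul_nonneg Real.pi_pos.le hδpos.le) (sub_nonneg.2 hδ1)]
  calc ENNReal.ofReal (2*L*(ε+δ) + Real.pi*(ε+δ)^2)
      ≤ ENNReal.ofReal ((2*L*ε + Real.pi*ε^2) + c*δ) := ENNReal.ofReal_le_ofReal hexp
    _ = ENNReal.ofReal (2*L*ε + Real.pi*ε^2) + ENNReal.ofReal (c*δ) :=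
        ENNReal.ofReal_add (by nlinarith [Real.pi_pos]) (by positivity)
    _ ≤ ENNReal.ofReal (2*L*ε + Real.pi*ε^2) + (η : ENNReal) := by
        gcongr
        rw [← ENNReal.ofReal_coe_nnreal]
        exact ENNReal.ofReal_le_ofReal hδc
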